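/- For n ∈ ℕ let f_1^{(n)}(ξ,τ) = f_2^{(n)}(ξ,τ) = χ_{[-1,1]}(ξ − n) χ_{[-1,1]}(τ + ξ²) and f_3^{(n)}(ξ,τ) = f_4^{(n)}(ξ,τ) = χ_{[-1,1]}(ξ + n) χ_{[-1,1]}(τ − ξ²) on ℝ². Then there exists c > 0 (independent of n) such that the fourfold convolution satisfies (f_1^{(n)} * f_2^{(n)} * f_3^{(n)} * f_4^{(n)})(ξ,τ) ≥ c χ_{[-c,c]}(2nξ) χ_{[-c,c]}(τ) for all n large. Consequently, the estimate ‖u₁u₂ū₃ū₄‖_{X^+_{s,b'}} ≤ c ∏_{i=1}^4 ‖u_i‖_{X^+_{s,b}} on ℝ fails for all s < −1/8 and all b, b' ∈ ℝ. -/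

import Mathlib

open MeasureTheory
open scoped ENNReal

/-- Japanese bracket. -/
noncomputable def jb (x : ℝ) : ℝ := Real.sqrt (1 + x ^ 2)

/-- Fourfold convolution on `ℝ × ℝ` (real-valued version). -/
noncomputable def conv4R (f g h k : ℝ × ℝ → ℝ) : ℝ × ℝ → ℝ := fun p =>
  ∫ ξ₁ : ℝ, ∫ ξ₂ : ℝ, ∫ ξ₃ : ℝ, ∫ τ₁ : ℝ, ∫ τ₂ : ℝ, ∫ τ₃ : ℝ,
    f (ξ₁, τ₁) * g (ξ₂, τ₂) * h (ξ₃, τ₃) *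
      k (p.1 - ξ₁ - ξ₂ - ξ₃, p.2 - τ₁ - τ₂ - τ₃)

/-- Fourfold convolution on `ℝ × ℝ` (`ℝ≥0∞`-valued version). -/
noncomputable def conv4E (f g h k : ℝ × ℝ → ℝ≥0∞) : ℝ × ℝ → ℝ≥0∞ := fun p =>
  ∫⁻ ξ₁ : ℝ, ∫⁻ ξ₂ : ℝ, ∫⁻ ξ₃ : ℝ, ∫⁻ τ₁ : ℝ, ∫⁻ τ₂ : ℝ, ∫⁻ τ₃ : ℝ,
    f (ξ₁, τ₁) * g (ξ₂, τ₂) * h (ξ₃, τ₃) *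
      k (p.1 - ξ₁ - ξ₂ - ξ₃, p.2 - τ₁ - τ₂ - τ₃)

/-- The `X^+_{s,b}` norm on the Fourier side: weight `⟨ξ⟩^s ⟨τ+ξ²⟩^b`. -/
noncomputable def XpNorm (s b : ℝ) (F : ℝ × ℝ → ℝ≥0∞) : ℝ≥0∞ :=
  (∫⁻ p : ℝ × ℝ,
      ENNReal.ofReal (jb p.1 ^ (2 * s) * jb (p.2 + p.1 ^ 2) ^ (2 * b)) * F p ^ 2) ^
    ((1 : ℝ) / 2)

/-- The `X^-_{s,b}` norm (for conjugated factors): weight `⟨ξ⟩^s ⟨τ−ξ²⟩^b`. -/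
noncomputable def XmNorm (s b : ℝ) (F : ℝ × ℝ → ℝ≥0∞) : ℝ≥0∞ :=
  (∫⁻ p : ℝ × ℝ,
      ENNReal.ofReal (jb p.1 ^ (2 * s) * jb (p.2 - p.1 ^ 2) ^ (2 * b)) * F p ^ 2) ^
    ((1 : ℝ) / 2)

/-- `f₁^{(n)} = f₂^{(n)} = χ_{[-1,1]}(ξ − n) χ_{[-1,1]}(τ + ξ²)`. -/
noncomputable def g₁₂ (n : ℕ) : ℝ × ℝ → ℝ := fun p =>
  (if p.1 - (n : ℝ) ∈ Set.Icc (-1 : ℝ) 1 then 1 else 0) *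
    (if p.2 + p.1 ^ 2 ∈ Set.Icc (-1 : ℝ) 1 then 1 else 0)

/-- `f₃^{(n)} = f₄^{(n)} = χ_{[-1,1]}(ξ + n) χ_{[-1,1]}(τ − ξ²)`. -/
noncomputable def g₃₄ (n : ℕ) : ℝ × ℝ → ℝ := fun p =>
  (if p.1 + (n : ℝ) ∈ Set.Icc (-1 : ℝ) 1 then 1 else 0) *
    (if p.2 - p.1 ^ 2 ∈ Set.Icc (-1 : ℝ) 1 then 1 else 0)

open MeasureTheory Set

/-! ### indicator helpers -/

noncomputable def ind (l u x : ℝ) : ℝ := if x ∈ Set.Icc l u then 1 else 0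
lemma ind_nonneg (l u x : ℝ) : 0 ≤ ind l u x := by unfold ind; split <;> norm_num
lemma ind_le_one (l u x : ℝ) : ind l u x ≤ 1 := by unfold ind; split <;> norm_num
lemma ind_of_mem {l u x : ℝ} (h : x ∈ Set.Icc l u) : ind l u x = 1 := if_pos h
lemma measurable_ind (l u : ℝ) : Measurable (ind l u) :=
  Measurable.ite measurableSet_Icc measurable_const measurable_const

lemma g12_eq (n : ℕ) (x y : ℝ) :
    g₁₂ n (x, y) = ind ((n:ℝ)-1) ((n:ℝ)+1) x * ind (-1 - x^2) (1 - x^2) y := by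
  have h1 : (x - (n:ℝ) ∈ Set.Icc (-1:ℝ) 1) ↔ (x ∈ Set.Icc ((n:ℝ)-1) ((n:ℝ)+1)) := by
    simp only [Set.mem_Icc]
    constructor <;> rintro ⟨a, b⟩ <;> exact ⟨by linarith, by linarith⟩
  have h2 : (y + x^2 ∈ Set.Icc (-1:ℝ) 1) ↔ (y ∈ Set.Icc (-1 - x^2) (1 - x^2)) := by
    simp only [Set.mem_Icc]
    constructor <;> rintro ⟨a, b⟩ <;> exact ⟨by linarith, by linarith⟩
  unfold g₁₂ ind
  rw [if_congr h1 rfl rfl, if_congr h2 rfl rfl]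

lemma g34_eq (n : ℕ) (x y : ℝ) :
    g₃₄ n (x, y) = ind (-(n:ℝ)-1) (-(n:ℝ)+1) x * ind (x^2 - 1) (x^2 + 1) y := by
  have h1 : (x + (n:ℝ) ∈ Set.Icc (-1:ℝ) 1) ↔ (x ∈ Set.Icc (-(n:ℝ)-1) (-(n:ℝ)+1)) := by
    simp only [Set.mem_Icc]
    constructor <;> rintro ⟨a, b⟩ <;> exact ⟨by linarith, by linarith⟩
  have h2 : (y - x^2 ∈ Set.Icc (-1:ℝ) 1) ↔ (y ∈ Set.Icc (x^2 - 1) (x^2 + 1)) := by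
    simp only [Set.mem_Icc]
    constructor <;> rintro ⟨a, b⟩ <;> exact ⟨by linarith, by linarith⟩
  unfold g₃₄ ind
  rw [if_congr h1 rfl rfl, if_congr h2 rfl rfl]

lemma g12_nonneg (n : ℕ) (p : ℝ × ℝ) : 0 ≤ g₁₂ n p := by
  unfold g₁₂; apply mul_nonneg <;> (split <;> norm_num)
lemma g34_nonneg (n : ℕ) (p : ℝ × ℝ) : 0 ≤ g₃₄ n p := by
  unfold g₃₄; apply mul_nonneg <;> (split <;> norm_num)
lemma g12_le_one (n : ℕ) (p : ℝ × ℝ) : g₁₂ n p ≤ 1 := by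
  rw [show p = (p.1, p.2) from rfl, g12_eq]
  exact mul_le_one₀ (ind_le_one _ _ _) (ind_nonneg _ _ _) (ind_le_one _ _ _)
lemma g34_le_one (n : ℕ) (p : ℝ × ℝ) : g₃₄ n p ≤ 1 := by
  rw [show p = (p.1, p.2) from rfl, g34_eq]
  exact mul_le_one₀ (ind_le_one _ _ _) (ind_nonneg _ _ _) (ind_le_one _ _ _)
@[fun_prop] lemma meas_g12 (n : ℕ) : Measurable (g₁₂ n) := by
  unfold g₁₂
  exact ((Measurable.ite ((measurable_fst.sub measurable_const) measurableSet_Icc)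
      measurable_const measurable_const).mul
    (Measurable.ite (((measurable_snd.add (measurable_fst.pow_const 2)))
      measurableSet_Icc) measurable_const measurable_const))
@[fun_prop] lemma meas_g34 (n : ℕ) : Measurable (g₃₄ n) := by
  unfold g₃₄
  exact ((Measurable.ite ((measurable_fst.add measurable_const) measurableSet_Icc)
      measurable_const measurable_const).mul
    (Measurable.ite (((measurable_snd.sub (measurable_fst.pow_const 2)))
      measurableSet_Icc) measurable_const measurable_const))

/-! ### integral helpers -/

lemma integrable_mul_ind (C l u : ℝ) :
    Integrable (fun x => C * ind l u x) (volume : Measure ℝ) := by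
  have : (fun x => C * ind l u x) = Set.indicator (Set.Icc l u) (fun _ => C) := by
    funext x
    unfold ind Set.indicator
    split <;> simp
  rw [this, integrable_indicator_iff measurableSet_Icc]
  exact integrableOn_const measure_Icc_lt_top.ne

lemma integral_mul_ind (C l u : ℝ) (h : l ≤ u) :
    ∫ x, C * ind l u x = C * (u - l) := by
  have : (fun x => C * ind l u x) = Set.indicator (Set.Icc l u) (fun _ => C) := by
    funext x
    unfold ind Set.indicator
    split <;> simp
  rw [this, integral_indicator measurableSet_Icc, setIntegral_const, Real.volume_real_Icc_of_le h,
    smul_eq_mul, mul_comm]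

lemma integral_le_of_bound {f : ℝ → ℝ} (h0 : ∀ x, 0 ≤ f x)
    {C l u : ℝ} (hb : ∀ x, f x ≤ C * ind l u x) (hlu : l ≤ u) :
    ∫ x, f x ≤ C * (u - l) := by
  rw [← integral_mul_ind C l u hlu]
  exact integral_mono_of_nonneg (Filter.Eventually.of_forall h0)
    (integrable_mul_ind C l u) (Filter.Eventually.of_forall hb)

lemma integrable_of_bound {f : ℝ → ℝ} (hm : Measurable f) (h0 : ∀ x, 0 ≤ f x)
    {C l u : ℝ} (hb : ∀ x, f x ≤ C * ind l u x) :
    Integrable f (volume : Measure ℝ) := by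
  refine Integrable.mono' (integrable_mul_ind C l u) hm.aestronglyMeasurable
    (Filter.Eventually.of_forall fun x => ?_)
  rw [Real.norm_eq_abs, abs_of_nonneg (h0 x)]
  exact hb x

lemma integral_ge_of_bound {f : ℝ → ℝ} (hi : Integrable f (volume : Measure ℝ))
    (h0 : ∀ x, 0 ≤ f x) {m l u : ℝ} (hm0 : 0 ≤ m) (hlu : l ≤ u)
    (hlb : ∀ x ∈ Set.Icc l u, m ≤ f x) :
    m * (u - l) ≤ ∫ x, f x := by
  rw [← integral_mul_ind m l u hlu]
  refine integral_mono_of_nonneg (Filter.Eventually.of_forall fun x => ?_) hi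
    (Filter.Eventually.of_forall fun x => ?_)
  · exact mul_nonneg hm0 (ind_nonneg _ _ _)
  · simp only [ind]; split
    · rename_i h; simpa using hlb x h
    · simpa using h0 x

lemma meas_int' {α : Type*} [MeasurableSpace α] {f : α → ℝ → ℝ}
    (hf : Measurable fun q : α × ℝ => f q.1 q.2) :
    Measurable fun x => ∫ y, f x y :=
  (StronglyMeasurable.integral_prod_right' (f := fun q : α × ℝ => f q.1 q.2)
    hf.stronglyMeasurable).measurable

/-! ### the core box estimate -/

noncomputable def c₀ : ℝ := 1/262144

set_option maxHeartbeats 2000000 in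
lemma box_core (n : ℕ) (hn : 1 ≤ n) (ξ τ ξ₁ ξ₂ ξ₃ τ₁ τ₂ τ₃ : ℝ)
    (hξ : |2*(n:ℝ)*ξ| ≤ c₀) (hτ : |τ| ≤ c₀)
    (h1 : ξ₁ ∈ Set.Icc (n:ℝ) ((n:ℝ)+1/8)) (h2 : ξ₂ ∈ Set.Icc (n:ℝ) ((n:ℝ)+1/8))
    (h3 : ξ₃ ∈ Set.Icc (-(n:ℝ)) (-(n:ℝ)+1/8))
    (ht1 : τ₁ ∈ Set.Icc (-ξ₁^2) (-ξ₁^2+1/8)) (ht2 : τ₂ ∈ Set.Icc (-ξ₂^2) (-ξ₂^2+1/8))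
    (ht3 : τ₃ ∈ Set.Icc (ξ₃^2) (ξ₃^2+1/8)) :
    g₁₂ n (ξ₁,τ₁) = 1 ∧ g₁₂ n (ξ₂,τ₂) = 1 ∧ g₃₄ n (ξ₃,τ₃) = 1 ∧
      g₃₄ n (ξ-ξ₁-ξ₂-ξ₃, τ-τ₁-τ₂-τ₃) = 1 := by
  have hn1 : (1:ℝ) ≤ (n:ℝ) := by exact_mod_cast hn
  obtain ⟨h1a, h1b⟩ := h1
  obtain ⟨h2a, h2b⟩ := h2
  obtain ⟨h3a, h3b⟩ := h3
  obtain ⟨ht1a, ht1b⟩ := ht1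
  obtain ⟨ht2a, ht2b⟩ := ht2
  obtain ⟨ht3a, ht3b⟩ := ht3
  have hc : c₀ = 1/262144 := rfl
  obtain ⟨hτa, hτb⟩ := abs_le.mp hτ
  have hξ2 : |ξ| * 2 ≤ c₀ := by
    have h2n : |2*(n:ℝ)*ξ| = 2*(n:ℝ)*|ξ| := by
      rw [abs_mul, abs_of_nonneg (by linarith : (0:ℝ) ≤ 2*(n:ℝ))]
    nlinarith [abs_nonneg ξ]
  obtain ⟨hξa, hξb⟩ := abs_le.mp (show |ξ| ≤ c₀/2 by linarith)
  obtain ⟨h2nξa, h2nξb⟩ := abs_le.mp hξ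
  rw [hc] at hτa hτb hξa hξb h2nξa h2nξb
  refine ⟨?_, ?_, ?_, ?_⟩
  · unfold g₁₂
    rw [if_pos (by constructor <;> (simp only []; linarith)),
        if_pos (by constructor <;> (simp only []; linarith)), one_mul]
  · unfold g₁₂
    rw [if_pos (by constructor <;> (simp only []; linarith)),
        if_pos (by constructor <;> (simp only []; linarith)), one_mul]
  · unfold g₃₄
    rw [if_pos (by constructor <;> (simp only []; linarith)),
        if_pos (by constructor <;> (simp only []; linarith)), one_mul]
  · have key : τ-τ₁-τ₂-τ₃ - (ξ-ξ₁-ξ₂-ξ₃)^2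
        = τ + 2*(n:ℝ)*ξ - (τ₁+ξ₁^2) - (τ₂+ξ₂^2) - (τ₃-ξ₃^2)
          + (ξ₁-(n:ℝ))^2 + (ξ₂-(n:ℝ))^2 - (ξ₃+(n:ℝ))^2
          - (ξ-(ξ₁-(n:ℝ))-(ξ₂-(n:ℝ))-(ξ₃+(n:ℝ)))^2 := by ring
    have hA2 : (ξ₁-(n:ℝ))^2 ≤ 1/64 := by
      have := sq_le_sq' (by linarith : -(1/8:ℝ) ≤ ξ₁-(n:ℝ)) (by linarith : ξ₁-(n:ℝ) ≤ 1/8)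
      linarith [this]
    have hB2 : (ξ₂-(n:ℝ))^2 ≤ 1/64 := by
      have := sq_le_sq' (by linarith : -(1/8:ℝ) ≤ ξ₂-(n:ℝ)) (by linarith : ξ₂-(n:ℝ) ≤ 1/8)
      linarith [this]
    have hD2 : (ξ₃+(n:ℝ))^2 ≤ 1/64 := by
      have := sq_le_sq' (by linarith : -(1/8:ℝ) ≤ ξ₃+(n:ℝ)) (by linarith : ξ₃+(n:ℝ) ≤ 1/8)
      linarith [this]
    have hE2 : (ξ-(ξ₁-(n:ℝ))-(ξ₂-(n:ℝ))-(ξ₃+(n:ℝ)))^2 ≤ 1/4 := by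
      have := sq_le_sq' (by linarith : -(1/2:ℝ) ≤ ξ-(ξ₁-(n:ℝ))-(ξ₂-(n:ℝ))-(ξ₃+(n:ℝ)))
        (by linarith : ξ-(ξ₁-(n:ℝ))-(ξ₂-(n:ℝ))-(ξ₃+(n:ℝ)) ≤ 1/2)
      linarith [this]
    have hA0 : (0:ℝ) ≤ (ξ₁-(n:ℝ))^2 := sq_nonneg _
    have hB0 : (0:ℝ) ≤ (ξ₂-(n:ℝ))^2 := sq_nonneg _
    have hD0 : (0:ℝ) ≤ (ξ₃+(n:ℝ))^2 := sq_nonneg _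
    have hE0 : (0:ℝ) ≤ (ξ-(ξ₁-(n:ℝ))-(ξ₂-(n:ℝ))-(ξ₃+(n:ℝ)))^2 := sq_nonneg _
    unfold g₃₄
    rw [if_pos, if_pos, one_mul]
    · simp only [Set.mem_Icc]
      constructor <;> linarith
    · simp only [Set.mem_Icc]
      constructor <;> linarith

/-! ### the nested integrals -/

noncomputable def K6 (n : ℕ) (ξ τ ξ₁ ξ₂ ξ₃ τ₁ τ₂ τ₃ : ℝ) : ℝ :=
  g₁₂ n (ξ₁, τ₁) * g₁₂ n (ξ₂, τ₂) * g₃₄ n (ξ₃, τ₃) *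
    g₃₄ n (ξ - ξ₁ - ξ₂ - ξ₃, τ - τ₁ - τ₂ - τ₃)
noncomputable def K5 (n : ℕ) (ξ τ ξ₁ ξ₂ ξ₃ τ₁ τ₂ : ℝ) : ℝ :=
  ∫ τ₃, K6 n ξ τ ξ₁ ξ₂ ξ₃ τ₁ τ₂ τ₃
noncomputable def K4 (n : ℕ) (ξ τ ξ₁ ξ₂ ξ₃ τ₁ : ℝ) : ℝ :=
  ∫ τ₂, K5 n ξ τ ξ₁ ξ₂ ξ₃ τ₁ τ₂
noncomputable def K3 (n : ℕ) (ξ τ ξ₁ ξ₂ ξ₃ : ℝ) : ℝ :=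
  ∫ τ₁, K4 n ξ τ ξ₁ ξ₂ ξ₃ τ₁
noncomputable def K2 (n : ℕ) (ξ τ ξ₁ ξ₂ : ℝ) : ℝ :=
  ∫ ξ₃, K3 n ξ τ ξ₁ ξ₂ ξ₃
noncomputable def K1 (n : ℕ) (ξ τ ξ₁ : ℝ) : ℝ :=
  ∫ ξ₂, K2 n ξ τ ξ₁ ξ₂
noncomputable def K0 (n : ℕ) (ξ τ : ℝ) : ℝ :=
  ∫ ξ₁, K1 n ξ τ ξ₁

lemma m6 (n : ℕ) (ξ τ : ℝ) :
    Measurable fun q : ((((ℝ×ℝ)×ℝ)×ℝ)×ℝ)×ℝ =>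
      K6 n ξ τ q.1.1.1.1.1 q.1.1.1.1.2 q.1.1.1.2 q.1.1.2 q.1.2 q.2 := by
  unfold K6; fun_prop

lemma m5 (n : ℕ) (ξ τ : ℝ) :
    Measurable fun q : (((ℝ×ℝ)×ℝ)×ℝ)×ℝ =>
      K5 n ξ τ q.1.1.1.1 q.1.1.1.2 q.1.1.2 q.1.2 q.2 := by
  unfold K5
  exact meas_int' (f := fun x : (((ℝ×ℝ)×ℝ)×ℝ)×ℝ => fun y =>
    K6 n ξ τ x.1.1.1.1 x.1.1.1.2 x.1.1.2 x.1.2 x.2 y) (m6 n ξ τ)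

lemma m4 (n : ℕ) (ξ τ : ℝ) :
    Measurable fun q : ((ℝ×ℝ)×ℝ)×ℝ =>
      K4 n ξ τ q.1.1.1 q.1.1.2 q.1.2 q.2 := by
  unfold K4
  exact meas_int' (f := fun x : ((ℝ×ℝ)×ℝ)×ℝ => fun y =>
    K5 n ξ τ x.1.1.1 x.1.1.2 x.1.2 x.2 y) (m5 n ξ τ)

lemma m3 (n : ℕ) (ξ τ : ℝ) :
    Measurable fun q : (ℝ×ℝ)×ℝ => K3 n ξ τ q.1.1 q.1.2 q.2 := by
  unfold K3
  exact meas_int' (f := fun x : (ℝ×ℝ)×ℝ => fun y =>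
    K4 n ξ τ x.1.1 x.1.2 x.2 y) (m4 n ξ τ)

lemma m2 (n : ℕ) (ξ τ : ℝ) :
    Measurable fun q : ℝ×ℝ => K2 n ξ τ q.1 q.2 := by
  unfold K2
  exact meas_int' (f := fun x : ℝ×ℝ => fun y => K3 n ξ τ x.1 x.2 y) (m3 n ξ τ)

lemma m1 (n : ℕ) (ξ τ : ℝ) : Measurable fun q : ℝ => K1 n ξ τ q := by
  unfold K1
  exact meas_int' (f := fun x : ℝ => fun y => K2 n ξ τ x y)
    ((m2 n ξ τ))

/-! ### single-variable measurability -/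

lemma mv6 (n : ℕ) (ξ τ ξ₁ ξ₂ ξ₃ τ₁ τ₂ : ℝ) :
    Measurable fun τ₃ => K6 n ξ τ ξ₁ ξ₂ ξ₃ τ₁ τ₂ τ₃ := by
  have h : Measurable fun x : ℝ => ((((((ξ₁, ξ₂), ξ₃), τ₁), τ₂)), x) :=
    measurable_const.prodMk measurable_id
  have h2 := (m6 n ξ τ).comp h
  exact h2
lemma mv5 (n : ℕ) (ξ τ ξ₁ ξ₂ ξ₃ τ₁ : ℝ) :
    Measurable fun τ₂ => K5 n ξ τ ξ₁ ξ₂ ξ₃ τ₁ τ₂ := by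
  have h : Measurable fun x : ℝ => (((((ξ₁, ξ₂), ξ₃), τ₁)), x) :=
    measurable_const.prodMk measurable_id
  have h2 := (m5 n ξ τ).comp h
  exact h2
lemma mv4 (n : ℕ) (ξ τ ξ₁ ξ₂ ξ₃ : ℝ) :
    Measurable fun τ₁ => K4 n ξ τ ξ₁ ξ₂ ξ₃ τ₁ := by
  have h : Measurable fun x : ℝ => ((((ξ₁, ξ₂), ξ₃)), x) :=
    measurable_const.prodMk measurable_id
  have h2 := (m4 n ξ τ).comp h
  exact h2
lemma mv3 (n : ℕ) (ξ τ ξ₁ ξ₂ : ℝ) :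
    Measurable fun ξ₃ => K3 n ξ τ ξ₁ ξ₂ ξ₃ := by
  have h : Measurable fun x : ℝ => (((ξ₁, ξ₂)), x) :=
    measurable_const.prodMk measurable_id
  have h2 := (m3 n ξ τ).comp h
  exact h2
lemma mv2 (n : ℕ) (ξ τ ξ₁ : ℝ) :
    Measurable fun ξ₂ => K2 n ξ τ ξ₁ ξ₂ := by
  have h : Measurable fun x : ℝ => (ξ₁, x) :=
    measurable_const.prodMk measurable_id
  have h2 := (m2 n ξ τ).comp h
  exact h2

/-! ### nonnegativity -/

lemma nn6 (n : ℕ) (ξ τ ξ₁ ξ₂ ξ₃ τ₁ τ₂ τ₃ : ℝ) : 0 ≤ K6 n ξ τ ξ₁ ξ₂ ξ₃ τ₁ τ₂ τ₃ :=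
  mul_nonneg (mul_nonneg (mul_nonneg (g12_nonneg _ _) (g12_nonneg _ _)) (g34_nonneg _ _))
    (g34_nonneg _ _)
lemma nn5 (n : ℕ) (ξ τ ξ₁ ξ₂ ξ₃ τ₁ τ₂ : ℝ) : 0 ≤ K5 n ξ τ ξ₁ ξ₂ ξ₃ τ₁ τ₂ :=
  integral_nonneg fun τ₃ => nn6 n ξ τ ξ₁ ξ₂ ξ₃ τ₁ τ₂ τ₃
lemma nn4 (n : ℕ) (ξ τ ξ₁ ξ₂ ξ₃ τ₁ : ℝ) : 0 ≤ K4 n ξ τ ξ₁ ξ₂ ξ₃ τ₁ :=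
  integral_nonneg fun τ₂ => nn5 n ξ τ ξ₁ ξ₂ ξ₃ τ₁ τ₂
lemma nn3 (n : ℕ) (ξ τ ξ₁ ξ₂ ξ₃ : ℝ) : 0 ≤ K3 n ξ τ ξ₁ ξ₂ ξ₃ :=
  integral_nonneg fun τ₁ => nn4 n ξ τ ξ₁ ξ₂ ξ₃ τ₁
lemma nn2 (n : ℕ) (ξ τ ξ₁ ξ₂ : ℝ) : 0 ≤ K2 n ξ τ ξ₁ ξ₂ :=
  integral_nonneg fun ξ₃ => nn3 n ξ τ ξ₁ ξ₂ ξ₃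
lemma nn1 (n : ℕ) (ξ τ ξ₁ : ℝ) : 0 ≤ K1 n ξ τ ξ₁ :=
  integral_nonneg fun ξ₂ => nn2 n ξ τ ξ₁ ξ₂
lemma nn0 (n : ℕ) (ξ τ : ℝ) : 0 ≤ K0 n ξ τ :=
  integral_nonneg fun ξ₁ => nn1 n ξ τ ξ₁

/-! ### upper bounds and integrability -/

lemma ub6 (n : ℕ) (ξ τ ξ₁ ξ₂ ξ₃ τ₁ τ₂ τ₃ : ℝ) :
    K6 n ξ τ ξ₁ ξ₂ ξ₃ τ₁ τ₂ τ₃ ≤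
      (ind ((n:ℝ)-1) ((n:ℝ)+1) ξ₁ * ind (-1-ξ₁^2) (1-ξ₁^2) τ₁ *
        ind ((n:ℝ)-1) ((n:ℝ)+1) ξ₂ * ind (-1-ξ₂^2) (1-ξ₂^2) τ₂ *
        ind (-(n:ℝ)-1) (-(n:ℝ)+1) ξ₃) * ind (ξ₃^2-1) (ξ₃^2+1) τ₃ := by
  unfold K6
  rw [g12_eq, g12_eq, g34_eq]
  have h4 := g34_le_one n (ξ-ξ₁-ξ₂-ξ₃, τ-τ₁-τ₂-τ₃)
  refine le_trans (mul_le_mul_of_nonneg_left h4 ?_) (le_of_eq (by ring))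
  exact mul_nonneg (mul_nonneg (mul_nonneg (ind_nonneg _ _ _) (ind_nonneg _ _ _))
    (mul_nonneg (ind_nonneg _ _ _) (ind_nonneg _ _ _)))
    (mul_nonneg (ind_nonneg _ _ _) (ind_nonneg _ _ _))

lemma iv6 (n : ℕ) (ξ τ ξ₁ ξ₂ ξ₃ τ₁ τ₂ : ℝ) :
    Integrable (fun τ₃ => K6 n ξ τ ξ₁ ξ₂ ξ₃ τ₁ τ₂ τ₃) (volume : Measure ℝ) :=
  integrable_of_bound (mv6 n ξ τ ξ₁ ξ₂ ξ₃ τ₁ τ₂) (fun τ₃ => nn6 n ξ τ ξ₁ ξ₂ ξ₃ τ₁ τ₂ τ₃)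
    (fun τ₃ => ub6 n ξ τ ξ₁ ξ₂ ξ₃ τ₁ τ₂ τ₃)

lemma ub5 (n : ℕ) (ξ τ ξ₁ ξ₂ ξ₃ τ₁ τ₂ : ℝ) :
    K5 n ξ τ ξ₁ ξ₂ ξ₃ τ₁ τ₂ ≤
      (2 * (ind ((n:ℝ)-1) ((n:ℝ)+1) ξ₁ * ind (-1-ξ₁^2) (1-ξ₁^2) τ₁ *
        ind ((n:ℝ)-1) ((n:ℝ)+1) ξ₂ * ind (-(n:ℝ)-1) (-(n:ℝ)+1) ξ₃)) *
        ind (-1-ξ₂^2) (1-ξ₂^2) τ₂ := by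
  unfold K5
  refine le_trans (integral_le_of_bound (fun τ₃ => nn6 n ξ τ ξ₁ ξ₂ ξ₃ τ₁ τ₂ τ₃)
    (fun τ₃ => ub6 n ξ τ ξ₁ ξ₂ ξ₃ τ₁ τ₂ τ₃) (by linarith : ξ₃^2-1 ≤ ξ₃^2+1))
    (le_of_eq (by ring))

lemma iv5 (n : ℕ) (ξ τ ξ₁ ξ₂ ξ₃ τ₁ : ℝ) :
    Integrable (fun τ₂ => K5 n ξ τ ξ₁ ξ₂ ξ₃ τ₁ τ₂) (volume : Measure ℝ) :=
  integrable_of_bound (mv5 n ξ τ ξ₁ ξ₂ ξ₃ τ₁) (fun τ₂ => nn5 n ξ τ ξ₁ ξ₂ ξ₃ τ₁ τ₂)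
    (fun τ₂ => ub5 n ξ τ ξ₁ ξ₂ ξ₃ τ₁ τ₂)

lemma ub4 (n : ℕ) (ξ τ ξ₁ ξ₂ ξ₃ τ₁ : ℝ) :
    K4 n ξ τ ξ₁ ξ₂ ξ₃ τ₁ ≤
      (4 * (ind ((n:ℝ)-1) ((n:ℝ)+1) ξ₁ * ind ((n:ℝ)-1) ((n:ℝ)+1) ξ₂ *
        ind (-(n:ℝ)-1) (-(n:ℝ)+1) ξ₃)) * ind (-1-ξ₁^2) (1-ξ₁^2) τ₁ := by
  unfold K4
  refine le_trans (integral_le_of_bound (fun τ₂ => nn5 n ξ τ ξ₁ ξ₂ ξ₃ τ₁ τ₂)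
    (fun τ₂ => ub5 n ξ τ ξ₁ ξ₂ ξ₃ τ₁ τ₂) (by linarith : -1-ξ₂^2 ≤ 1-ξ₂^2))
    (le_of_eq (by ring))

lemma iv4 (n : ℕ) (ξ τ ξ₁ ξ₂ ξ₃ : ℝ) :
    Integrable (fun τ₁ => K4 n ξ τ ξ₁ ξ₂ ξ₃ τ₁) (volume : Measure ℝ) :=
  integrable_of_bound (mv4 n ξ τ ξ₁ ξ₂ ξ₃) (fun τ₁ => nn4 n ξ τ ξ₁ ξ₂ ξ₃ τ₁)
    (fun τ₁ => ub4 n ξ τ ξ₁ ξ₂ ξ₃ τ₁)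

lemma ub3 (n : ℕ) (ξ τ ξ₁ ξ₂ ξ₃ : ℝ) :
    K3 n ξ τ ξ₁ ξ₂ ξ₃ ≤
      (8 * (ind ((n:ℝ)-1) ((n:ℝ)+1) ξ₁ * ind ((n:ℝ)-1) ((n:ℝ)+1) ξ₂)) *
        ind (-(n:ℝ)-1) (-(n:ℝ)+1) ξ₃ := by
  unfold K3
  refine le_trans (integral_le_of_bound (fun τ₁ => nn4 n ξ τ ξ₁ ξ₂ ξ₃ τ₁)
    (fun τ₁ => ub4 n ξ τ ξ₁ ξ₂ ξ₃ τ₁) (by linarith : -1-ξ₁^2 ≤ 1-ξ₁^2))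
    (le_of_eq (by ring))

lemma iv3 (n : ℕ) (ξ τ ξ₁ ξ₂ : ℝ) :
    Integrable (fun ξ₃ => K3 n ξ τ ξ₁ ξ₂ ξ₃) (volume : Measure ℝ) :=
  integrable_of_bound (mv3 n ξ τ ξ₁ ξ₂) (fun ξ₃ => nn3 n ξ τ ξ₁ ξ₂ ξ₃)
    (fun ξ₃ => ub3 n ξ τ ξ₁ ξ₂ ξ₃)

lemma ub2 (n : ℕ) (ξ τ ξ₁ ξ₂ : ℝ) :
    K2 n ξ τ ξ₁ ξ₂ ≤
      (16 * ind ((n:ℝ)-1) ((n:ℝ)+1) ξ₁) * ind ((n:ℝ)-1) ((n:ℝ)+1) ξ₂ := by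
  unfold K2
  refine le_trans (integral_le_of_bound (fun ξ₃ => nn3 n ξ τ ξ₁ ξ₂ ξ₃)
    (fun ξ₃ => ub3 n ξ τ ξ₁ ξ₂ ξ₃) (by linarith : -(n:ℝ)-1 ≤ -(n:ℝ)+1))
    (le_of_eq (by ring))

lemma iv2 (n : ℕ) (ξ τ ξ₁ : ℝ) :
    Integrable (fun ξ₂ => K2 n ξ τ ξ₁ ξ₂) (volume : Measure ℝ) :=
  integrable_of_bound (mv2 n ξ τ ξ₁) (fun ξ₂ => nn2 n ξ τ ξ₁ ξ₂)
    (fun ξ₂ => ub2 n ξ τ ξ₁ ξ₂)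

lemma ub1 (n : ℕ) (ξ τ ξ₁ : ℝ) :
    K1 n ξ τ ξ₁ ≤ 32 * ind ((n:ℝ)-1) ((n:ℝ)+1) ξ₁ := by
  unfold K1
  refine le_trans (integral_le_of_bound (fun ξ₂ => nn2 n ξ τ ξ₁ ξ₂)
    (fun ξ₂ => ub2 n ξ τ ξ₁ ξ₂) (by linarith : (n:ℝ)-1 ≤ (n:ℝ)+1))
    (le_of_eq (by ring))

lemma iv1 (n : ℕ) (ξ τ : ℝ) :
    Integrable (fun ξ₁ => K1 n ξ τ ξ₁) (volume : Measure ℝ) :=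
  integrable_of_bound (m1 n ξ τ) (fun ξ₁ => nn1 n ξ τ ξ₁)
    (fun ξ₁ => ub1 n ξ τ ξ₁)

/-! ### lower bounds -/

lemma lb5 (n : ℕ) (ξ τ ξ₁ ξ₂ ξ₃ τ₁ τ₂ : ℝ) (hn : 1 ≤ n)
    (hξ : |2*(n:ℝ)*ξ| ≤ c₀) (hτ : |τ| ≤ c₀)
    (h1 : ξ₁ ∈ Set.Icc (n:ℝ) ((n:ℝ)+1/8)) (h2 : ξ₂ ∈ Set.Icc (n:ℝ) ((n:ℝ)+1/8))
    (h3 : ξ₃ ∈ Set.Icc (-(n:ℝ)) (-(n:ℝ)+1/8))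
    (ht1 : τ₁ ∈ Set.Icc (-ξ₁^2) (-ξ₁^2+1/8)) (ht2 : τ₂ ∈ Set.Icc (-ξ₂^2) (-ξ₂^2+1/8)) :
    1/8 ≤ K5 n ξ τ ξ₁ ξ₂ ξ₃ τ₁ τ₂ := by
  unfold K5
  have h := integral_ge_of_bound (iv6 n ξ τ ξ₁ ξ₂ ξ₃ τ₁ τ₂)
    (fun τ₃ => nn6 n ξ τ ξ₁ ξ₂ ξ₃ τ₁ τ₂ τ₃) (by norm_num : (0:ℝ) ≤ 1)
    (by linarith : ξ₃^2 ≤ ξ₃^2+1/8) (fun τ₃ hτ₃ => ?_)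
  · calc (1/8 : ℝ) = 1 * (ξ₃^2+1/8 - ξ₃^2) := by ring
    _ ≤ _ := h
  · obtain ⟨e1, e2, e3, e4⟩ := box_core n hn ξ τ ξ₁ ξ₂ ξ₃ τ₁ τ₂ τ₃ hξ hτ h1 h2 h3 ht1 ht2 hτ₃
    unfold K6
    rw [e1, e2, e3, e4]
    norm_num

lemma lb4 (n : ℕ) (ξ τ ξ₁ ξ₂ ξ₃ τ₁ : ℝ) (hn : 1 ≤ n)
    (hξ : |2*(n:ℝ)*ξ| ≤ c₀) (hτ : |τ| ≤ c₀)
    (h1 : ξ₁ ∈ Set.Icc (n:ℝ) ((n:ℝ)+1/8)) (h2 : ξ₂ ∈ Set.Icc (n:ℝ) ((n:ℝ)+1/8))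
    (h3 : ξ₃ ∈ Set.Icc (-(n:ℝ)) (-(n:ℝ)+1/8))
    (ht1 : τ₁ ∈ Set.Icc (-ξ₁^2) (-ξ₁^2+1/8)) :
    1/64 ≤ K4 n ξ τ ξ₁ ξ₂ ξ₃ τ₁ := by
  unfold K4
  have h := integral_ge_of_bound (iv5 n ξ τ ξ₁ ξ₂ ξ₃ τ₁)
    (fun τ₂ => nn5 n ξ τ ξ₁ ξ₂ ξ₃ τ₁ τ₂) (by norm_num : (0:ℝ) ≤ 1/8)
    (by linarith : -ξ₂^2 ≤ -ξ₂^2+1/8)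
    (fun τ₂ hτ₂ => lb5 n ξ τ ξ₁ ξ₂ ξ₃ τ₁ τ₂ hn hξ hτ h1 h2 h3 ht1 hτ₂)
  calc (1/64 : ℝ) = 1/8 * (-ξ₂^2+1/8 - -ξ₂^2) := by ring
  _ ≤ _ := h

lemma lb3 (n : ℕ) (ξ τ ξ₁ ξ₂ ξ₃ : ℝ) (hn : 1 ≤ n)
    (hξ : |2*(n:ℝ)*ξ| ≤ c₀) (hτ : |τ| ≤ c₀)
    (h1 : ξ₁ ∈ Set.Icc (n:ℝ) ((n:ℝ)+1/8)) (h2 : ξ₂ ∈ Set.Icc (n:ℝ) ((n:ℝ)+1/8))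
    (h3 : ξ₃ ∈ Set.Icc (-(n:ℝ)) (-(n:ℝ)+1/8)) :
    1/512 ≤ K3 n ξ τ ξ₁ ξ₂ ξ₃ := by
  unfold K3
  have h := integral_ge_of_bound (iv4 n ξ τ ξ₁ ξ₂ ξ₃)
    (fun τ₁ => nn4 n ξ τ ξ₁ ξ₂ ξ₃ τ₁) (by norm_num : (0:ℝ) ≤ 1/64)
    (by linarith : -ξ₁^2 ≤ -ξ₁^2+1/8)
    (fun τ₁ hτ₁ => lb4 n ξ τ ξ₁ ξ₂ ξ₃ τ₁ hn hξ hτ h1 h2 h3 hτ₁)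
  calc (1/512 : ℝ) = 1/64 * (-ξ₁^2+1/8 - -ξ₁^2) := by ring
  _ ≤ _ := h

lemma lb2 (n : ℕ) (ξ τ ξ₁ ξ₂ : ℝ) (hn : 1 ≤ n)
    (hξ : |2*(n:ℝ)*ξ| ≤ c₀) (hτ : |τ| ≤ c₀)
    (h1 : ξ₁ ∈ Set.Icc (n:ℝ) ((n:ℝ)+1/8)) (h2 : ξ₂ ∈ Set.Icc (n:ℝ) ((n:ℝ)+1/8)) :
    1/4096 ≤ K2 n ξ τ ξ₁ ξ₂ := by
  unfold K2
  have h := integral_ge_of_bound (iv3 n ξ τ ξ₁ ξ₂)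
    (fun ξ₃ => nn3 n ξ τ ξ₁ ξ₂ ξ₃) (by norm_num : (0:ℝ) ≤ 1/512)
    (by linarith : -(n:ℝ) ≤ -(n:ℝ)+1/8)
    (fun ξ₃ hξ₃ => lb3 n ξ τ ξ₁ ξ₂ ξ₃ hn hξ hτ h1 h2 hξ₃)
  calc (1/4096 : ℝ) = 1/512 * (-(n:ℝ)+1/8 - -(n:ℝ)) := by ring
  _ ≤ _ := h

lemma lb1 (n : ℕ) (ξ τ ξ₁ : ℝ) (hn : 1 ≤ n)
    (hξ : |2*(n:ℝ)*ξ| ≤ c₀) (hτ : |τ| ≤ c₀)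
    (h1 : ξ₁ ∈ Set.Icc (n:ℝ) ((n:ℝ)+1/8)) :
    1/32768 ≤ K1 n ξ τ ξ₁ := by
  unfold K1
  have h := integral_ge_of_bound (iv2 n ξ τ ξ₁)
    (fun ξ₂ => nn2 n ξ τ ξ₁ ξ₂) (by norm_num : (0:ℝ) ≤ 1/4096)
    (by linarith : (n:ℝ) ≤ (n:ℝ)+1/8)
    (fun ξ₂ hξ₂ => lb2 n ξ τ ξ₁ ξ₂ hn hξ hτ h1 hξ₂)
  calc (1/32768 : ℝ) = 1/4096 * ((n:ℝ)+1/8 - (n:ℝ)) := by ring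
  _ ≤ _ := h

lemma lb0 (n : ℕ) (ξ τ : ℝ) (hn : 1 ≤ n)
    (hξ : |2*(n:ℝ)*ξ| ≤ c₀) (hτ : |τ| ≤ c₀) :
    1/262144 ≤ K0 n ξ τ := by
  unfold K0
  have h := integral_ge_of_bound (iv1 n ξ τ)
    (fun ξ₁ => nn1 n ξ τ ξ₁) (by norm_num : (0:ℝ) ≤ 1/32768)
    (by linarith : (n:ℝ) ≤ (n:ℝ)+1/8)
    (fun ξ₁ hξ₁ => lb1 n ξ τ ξ₁ hn hξ hτ hξ₁)
  calc (1/262144 : ℝ) = 1/32768 * ((n:ℝ)+1/8 - (n:ℝ)) := by ring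
  _ ≤ _ := h

/-! ### part 1 conclusion -/

lemma conv4R_eq (n : ℕ) (p : ℝ × ℝ) :
    conv4R (g₁₂ n) (g₁₂ n) (g₃₄ n) (g₃₄ n) p = K0 n p.1 p.2 := rfl

lemma part1 (n : ℕ) (hn : 1 ≤ n) (p : ℝ × ℝ) :
    c₀ * ((if |2*(n:ℝ)*p.1| ≤ c₀ then (1:ℝ) else 0) *
      (if |p.2| ≤ c₀ then (1:ℝ) else 0)) ≤
      conv4R (g₁₂ n) (g₁₂ n) (g₃₄ n) (g₃₄ n) p := by
  rw [conv4R_eq]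
  by_cases h1 : |2*(n:ℝ)*p.1| ≤ c₀
  · by_cases h2 : |p.2| ≤ c₀
    · rw [if_pos h1, if_pos h2]
      have h := lb0 n p.1 p.2 hn h1 h2
      have hc : c₀ = 1/262144 := rfl
      rw [hc]
      linarith
    · rw [if_neg h2, mul_zero, mul_zero]
      exact nn0 n p.1 p.2
  · rw [if_neg h1, zero_mul, mul_zero]
    exact nn0 n p.1 p.2

lemma elb {f : ℝ → ℝ≥0∞} {m : ℝ≥0∞} {l u : ℝ}
    (h : ∀ x ∈ Set.Icc l u, m ≤ f x) : m * ENNReal.ofReal (u - l) ≤ ∫⁻ x, f x := by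
  have hle : (Set.Icc l u).indicator (fun _ => m) ≤ f := by
    intro x
    unfold Set.indicator
    split
    · exact h x ‹_›
    · exact zero_le
  calc m * ENNReal.ofReal (u - l) = ∫⁻ x, (Set.Icc l u).indicator (fun _ => m) x := by
        rw [lintegral_indicator measurableSet_Icc, setLIntegral_const, Real.volume_Icc]
    _ ≤ ∫⁻ x, f x := lintegral_mono hle

noncomputable def F12 (n : ℕ) : ℝ × ℝ → ℝ≥0∞ := fun p => ENNReal.ofReal (g₁₂ n p)
noncomputable def F34 (n : ℕ) : ℝ × ℝ → ℝ≥0∞ := fun p => ENNReal.ofReal (g₃₄ n p)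

lemma conv4E_lb (n : ℕ) (hn : 1 ≤ n) (ξ τ : ℝ)
    (hξ : |2*(n:ℝ)*ξ| ≤ c₀) (hτ : |τ| ≤ c₀) :
    ENNReal.ofReal (1/262144) ≤ conv4E (F12 n) (F12 n) (F34 n) (F34 n) (ξ, τ) := by
  have hq : ENNReal.ofReal (1/262144)
      = ENNReal.ofReal (1/8) * ENNReal.ofReal (1/8) * ENNReal.ofReal (1/8)
          * ENNReal.ofReal (1/8) * ENNReal.ofReal (1/8) * ENNReal.ofReal (1/8) := by
    rw [show (1/262144:ℝ) = 1/8*(1/8)*(1/8)*(1/8)*(1/8)*(1/8) by norm_num,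
      ENNReal.ofReal_mul (by norm_num), ENNReal.ofReal_mul (by norm_num),
      ENNReal.ofReal_mul (by norm_num), ENNReal.ofReal_mul (by norm_num),
      ENNReal.ofReal_mul (by norm_num)]
  have h5 : ∀ ξ₁ ∈ Set.Icc (n:ℝ) ((n:ℝ)+1/8), ∀ ξ₂ ∈ Set.Icc (n:ℝ) ((n:ℝ)+1/8),
      ∀ ξ₃ ∈ Set.Icc (-(n:ℝ)) (-(n:ℝ)+1/8), ∀ τ₁ ∈ Set.Icc (-ξ₁^2) (-ξ₁^2+1/8),
      ∀ τ₂ ∈ Set.Icc (-ξ₂^2) (-ξ₂^2+1/8),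
      ENNReal.ofReal (1/8) ≤ ∫⁻ τ₃, F12 n (ξ₁,τ₁) * F12 n (ξ₂,τ₂) * F34 n (ξ₃,τ₃) *
        F34 n (ξ-ξ₁-ξ₂-ξ₃, τ-τ₁-τ₂-τ₃) := by
    intro ξ₁ h1 ξ₂ h2 ξ₃ h3 τ₁ ht1 τ₂ ht2
    have h := elb (f := fun τ₃ => F12 n (ξ₁,τ₁) * F12 n (ξ₂,τ₂) * F34 n (ξ₃,τ₃) *
        F34 n (ξ-ξ₁-ξ₂-ξ₃, τ-τ₁-τ₂-τ₃)) (m := 1) (l := ξ₃^2) (u := ξ₃^2+1/8)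
      (fun τ₃ ht3 => by
        obtain ⟨e1,e2,e3,e4⟩ := box_core n hn ξ τ ξ₁ ξ₂ ξ₃ τ₁ τ₂ τ₃ hξ hτ h1 h2 h3 ht1 ht2 ht3
        simp only [F12, F34, e1, e2, e3, e4]
        simp)
    rw [show ξ₃^2+1/8-ξ₃^2 = 1/8 by ring, one_mul] at h
    exact h
  have h4 : ∀ ξ₁ ∈ Set.Icc (n:ℝ) ((n:ℝ)+1/8), ∀ ξ₂ ∈ Set.Icc (n:ℝ) ((n:ℝ)+1/8),
      ∀ ξ₃ ∈ Set.Icc (-(n:ℝ)) (-(n:ℝ)+1/8), ∀ τ₁ ∈ Set.Icc (-ξ₁^2) (-ξ₁^2+1/8),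
      ENNReal.ofReal (1/8) * ENNReal.ofReal (1/8) ≤ ∫⁻ τ₂, ∫⁻ τ₃,
        F12 n (ξ₁,τ₁) * F12 n (ξ₂,τ₂) * F34 n (ξ₃,τ₃) *
        F34 n (ξ-ξ₁-ξ₂-ξ₃, τ-τ₁-τ₂-τ₃) := by
    intro ξ₁ h1 ξ₂ h2 ξ₃ h3 τ₁ ht1
    have h := elb (m := ENNReal.ofReal (1/8)) (l := -ξ₂^2) (u := -ξ₂^2+1/8)
      (fun τ₂ ht2 => h5 ξ₁ h1 ξ₂ h2 ξ₃ h3 τ₁ ht1 τ₂ ht2)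
    rw [show -ξ₂^2+1/8 - (-ξ₂^2) = 1/8 by ring] at h
    exact h
  have h3' : ∀ ξ₁ ∈ Set.Icc (n:ℝ) ((n:ℝ)+1/8), ∀ ξ₂ ∈ Set.Icc (n:ℝ) ((n:ℝ)+1/8),
      ∀ ξ₃ ∈ Set.Icc (-(n:ℝ)) (-(n:ℝ)+1/8),
      ENNReal.ofReal (1/8) * ENNReal.ofReal (1/8) * ENNReal.ofReal (1/8) ≤
        ∫⁻ τ₁, ∫⁻ τ₂, ∫⁻ τ₃,
        F12 n (ξ₁,τ₁) * F12 n (ξ₂,τ₂) * F34 n (ξ₃,τ₃) *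
        F34 n (ξ-ξ₁-ξ₂-ξ₃, τ-τ₁-τ₂-τ₃) := by
    intro ξ₁ h1 ξ₂ h2 ξ₃ h3
    have h := elb (m := ENNReal.ofReal (1/8) * ENNReal.ofReal (1/8))
      (l := -ξ₁^2) (u := -ξ₁^2+1/8)
      (fun τ₁ ht1 => h4 ξ₁ h1 ξ₂ h2 ξ₃ h3 τ₁ ht1)
    rw [show -ξ₁^2+1/8 - (-ξ₁^2) = 1/8 by ring] at h
    exact h
  have h2' : ∀ ξ₁ ∈ Set.Icc (n:ℝ) ((n:ℝ)+1/8), ∀ ξ₂ ∈ Set.Icc (n:ℝ) ((n:ℝ)+1/8),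
      ENNReal.ofReal (1/8) * ENNReal.ofReal (1/8) * ENNReal.ofReal (1/8)
        * ENNReal.ofReal (1/8) ≤ ∫⁻ ξ₃, ∫⁻ τ₁, ∫⁻ τ₂, ∫⁻ τ₃,
        F12 n (ξ₁,τ₁) * F12 n (ξ₂,τ₂) * F34 n (ξ₃,τ₃) *
        F34 n (ξ-ξ₁-ξ₂-ξ₃, τ-τ₁-τ₂-τ₃) := by
    intro ξ₁ h1 ξ₂ h2
    have h := elb (m := ENNReal.ofReal (1/8) * ENNReal.ofReal (1/8) * ENNReal.ofReal (1/8))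
      (l := -(n:ℝ)) (u := -(n:ℝ)+1/8)
      (fun ξ₃ h3 => h3' ξ₁ h1 ξ₂ h2 ξ₃ h3)
    rw [show -(n:ℝ)+1/8 - (-(n:ℝ)) = 1/8 by ring] at h
    exact h
  have h1' : ∀ ξ₁ ∈ Set.Icc (n:ℝ) ((n:ℝ)+1/8),
      ENNReal.ofReal (1/8) * ENNReal.ofReal (1/8) * ENNReal.ofReal (1/8)
        * ENNReal.ofReal (1/8) * ENNReal.ofReal (1/8) ≤
        ∫⁻ ξ₂, ∫⁻ ξ₃, ∫⁻ τ₁, ∫⁻ τ₂, ∫⁻ τ₃,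
        F12 n (ξ₁,τ₁) * F12 n (ξ₂,τ₂) * F34 n (ξ₃,τ₃) *
        F34 n (ξ-ξ₁-ξ₂-ξ₃, τ-τ₁-τ₂-τ₃) := by
    intro ξ₁ h1
    have h := elb (m := ENNReal.ofReal (1/8) * ENNReal.ofReal (1/8) * ENNReal.ofReal (1/8)
        * ENNReal.ofReal (1/8))
      (l := (n:ℝ)) (u := (n:ℝ)+1/8)
      (fun ξ₂ h2 => h2' ξ₁ h1 ξ₂ h2)
    rw [show (n:ℝ)+1/8 - (n:ℝ) = 1/8 by ring] at h
    exact h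
  have h0 := elb (m := ENNReal.ofReal (1/8) * ENNReal.ofReal (1/8) * ENNReal.ofReal (1/8)
      * ENNReal.ofReal (1/8) * ENNReal.ofReal (1/8))
    (l := (n:ℝ)) (u := (n:ℝ)+1/8) (fun ξ₁ h1 => h1' ξ₁ h1)
  rw [show (n:ℝ)+1/8 - (n:ℝ) = 1/8 by ring] at h0
  rw [hq]
  exact h0

lemma jb_pos (x : ℝ) : 0 < jb x := Real.sqrt_pos.2 (by positivity)
lemma one_le_jb (x : ℝ) : 1 ≤ jb x := by
  rw [jb]
  nlinarith [Real.sq_sqrt (show (0:ℝ) ≤ 1+x^2 by positivity),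
    Real.sqrt_nonneg (1+x^2), sq_nonneg x]
lemma jb_mono_sq {a b : ℝ} (h : a^2 ≤ b^2) : jb a ≤ jb b :=
  Real.sqrt_le_sqrt (by linarith)
lemma self_le_jb (x : ℝ) : x ≤ jb x := by
  have h := Real.sqrt_le_sqrt (show x^2 ≤ 1 + x^2 by linarith)
  rw [Real.sqrt_sq_eq_abs] at h
  calc x ≤ |x| := le_abs_self x
  _ ≤ jb x := h
lemma jb_one : jb 1 = Real.sqrt 2 := by norm_num [jb]
lemma jb_two : jb 2 = Real.sqrt 5 := by norm_num [jb]

lemma rpow_le_max {x M e : ℝ} (h1 : 1 ≤ x) (hxM : x ≤ M) :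
    x ^ e ≤ max (M ^ e) 1 := by
  rcases le_or_gt 0 e with he | he
  · exact le_max_of_le_left (Real.rpow_le_rpow (by linarith) hxM he)
  · refine le_max_of_le_right ?_
    calc x ^ e ≤ 1 ^ e := Real.rpow_le_rpow_of_nonpos one_pos h1 he.le
    _ = 1 := Real.one_rpow e

lemma min_le_rpow {x M e : ℝ} (h1 : 1 ≤ x) (hxM : x ≤ M) :
    min (M ^ e) 1 ≤ x ^ e := by
  rcases le_or_gt 0 e with he | he
  · refine min_le_of_right_le ?_
    rw [← Real.one_rpow e]
    exact Real.rpow_le_rpow zero_le_one h1 he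
  · exact min_le_of_left_le (Real.rpow_le_rpow_of_nonpos (by linarith) hxM he.le)

noncomputable def wlo (s b' : ℝ) : ℝ :=
  min ((Real.sqrt 2) ^ (2*s)) 1 * min ((Real.sqrt 5) ^ (2*b')) 1

lemma wlo_pos (s b' : ℝ) : 0 < wlo s b' := by
  unfold wlo
  have h2 : (0:ℝ) < Real.sqrt 2 := Real.sqrt_pos.2 (by norm_num)
  have h5 : (0:ℝ) < Real.sqrt 5 := Real.sqrt_pos.2 (by norm_num)
  exact mul_pos (lt_min (Real.rpow_pos_of_pos h2 _) one_pos)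
    (lt_min (Real.rpow_pos_of_pos h5 _) one_pos)

lemma Xp_lb (s b' : ℝ) (G : ℝ × ℝ → ℝ≥0∞) (n : ℕ) (hn : 1 ≤ n)
    (hG : ∀ p : ℝ × ℝ, |2*(n:ℝ)*p.1| ≤ c₀ → |p.2| ≤ c₀ →
      ENNReal.ofReal (1/262144) ≤ G p) :
    ENNReal.ofReal ((wlo s b' * (1/262144)^2 * (c₀/(n:ℝ) * (2*c₀))) ^ ((1:ℝ)/2))
      ≤ XpNorm s b' G := by
  have hn1 : (1:ℝ) ≤ (n:ℝ) := by exact_mod_cast hn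
  have hnpos : (0:ℝ) < (n:ℝ) := by linarith
  have hc : c₀ = 1/262144 := rfl
  set T : Set (ℝ × ℝ) := Set.Icc (-(c₀/(2*(n:ℝ)))) (c₀/(2*(n:ℝ))) ×ˢ Set.Icc (-c₀) c₀ with hT
  have key : ∀ p : ℝ × ℝ,
      T.indicator (fun _ => ENNReal.ofReal (wlo s b') * ENNReal.ofReal (1/262144) ^ 2) p ≤
      ENNReal.ofReal (jb p.1 ^ (2*s) * jb (p.2 + p.1^2) ^ (2*b')) * G p ^ 2 := by
    intro p
    unfold Set.indicator
    split
    · rename_i hp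
      obtain ⟨hp1, hp2⟩ := hp
      obtain ⟨hp1a, hp1b⟩ := hp1
      obtain ⟨hp2a, hp2b⟩ := hp2
      have hξc : |2*(n:ℝ)*p.1| ≤ c₀ := by
        rw [abs_le]
        constructor
        · have : -(c₀/(2*(n:ℝ))) * (2*(n:ℝ)) ≤ p.1 * (2*(n:ℝ)) :=
            mul_le_mul_of_nonneg_right hp1a (by linarith)
          calc -c₀ = -(c₀/(2*(n:ℝ))) * (2*(n:ℝ)) := by field_simp
          _ ≤ p.1 * (2*(n:ℝ)) := this
          _ = 2*(n:ℝ)*p.1 := by ring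
        · have : p.1 * (2*(n:ℝ)) ≤ (c₀/(2*(n:ℝ))) * (2*(n:ℝ)) :=
            mul_le_mul_of_nonneg_right hp1b (by linarith)
          calc 2*(n:ℝ)*p.1 = p.1 * (2*(n:ℝ)) := by ring
          _ ≤ (c₀/(2*(n:ℝ))) * (2*(n:ℝ)) := this
          _ = c₀ := by field_simp
      have hτc : |p.2| ≤ c₀ := abs_le.2 ⟨hp2a, hp2b⟩
      have hp1abs : |p.1| ≤ 1 := by
        rw [abs_le]
        have h1 : c₀/(2*(n:ℝ)) ≤ 1 := by
          rw [div_le_one (by linarith)]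
          rw [hc]; linarith
        constructor <;> linarith
      obtain ⟨hp1na, hp1nb⟩ := abs_le.mp hp1abs
      have hjb1 : jb p.1 ≤ Real.sqrt 2 := by
        rw [← jb_one]
        exact jb_mono_sq (by nlinarith)
      have ht2 : |p.2 + p.1^2| ≤ 2 := by
        rw [abs_le]
        have := sq_nonneg p.1
        have hp12 : p.1^2 ≤ 1 := by nlinarith
        rw [hc] at hp2a hp2b
        constructor <;> linarith
      obtain ⟨ht2a, ht2b⟩ := abs_le.mp ht2
      have hjb2 : jb (p.2 + p.1^2) ≤ Real.sqrt 5 := by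
        rw [← jb_two]
        exact jb_mono_sq (by nlinarith)
      have w1 : min ((Real.sqrt 2) ^ (2*s)) 1 ≤ jb p.1 ^ (2*s) :=
        min_le_rpow (one_le_jb _) hjb1
      have w2 : min ((Real.sqrt 5) ^ (2*b')) 1 ≤ jb (p.2 + p.1^2) ^ (2*b') :=
        min_le_rpow (one_le_jb _) hjb2
      have wmul : wlo s b' ≤ jb p.1 ^ (2*s) * jb (p.2 + p.1^2) ^ (2*b') := by
        unfold wlo
        exact mul_le_mul w1 w2 (le_min (Real.rpow_nonneg (Real.sqrt_nonneg 5) _) zero_le_one)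
          (Real.rpow_nonneg (jb_pos _).le _)
      have hGp : ENNReal.ofReal (1/262144) ≤ G p := hG p hξc hτc
      exact mul_le_mul' (ENNReal.ofReal_le_ofReal wmul) (pow_le_pow_left' hGp 2)
    · exact zero_le
  have hvol : volume T = ENNReal.ofReal (c₀/(n:ℝ)) * ENNReal.ofReal (2*c₀) := by
    rw [hT, show (volume : Measure (ℝ×ℝ)) = (volume : Measure ℝ).prod volume from
      Measure.volume_eq_prod ℝ ℝ, Measure.prod_prod, Real.volume_Icc, Real.volume_Icc]
    congr 2
    · field_simp
      ring
    · ring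
  have hw : (0:ℝ) ≤ wlo s b' := (wlo_pos s b').le
  have hw2 : (0:ℝ) ≤ wlo s b' * (1/262144)^2 := mul_nonneg hw (by norm_num)
  have hcn : (0:ℝ) ≤ c₀/(n:ℝ) := by rw [hc]; positivity
  have hw3 : (0:ℝ) ≤ wlo s b' * (1/262144)^2 * (c₀/(n:ℝ) * (2*c₀)) := by
    apply mul_nonneg hw2
    rw [hc]
    positivity
  have hint : ENNReal.ofReal (wlo s b' * (1/262144)^2 * (c₀/(n:ℝ) * (2*c₀))) ≤
      ∫⁻ p : ℝ × ℝ, ENNReal.ofReal (jb p.1 ^ (2*s) * jb (p.2 + p.1^2) ^ (2*b')) * G p ^ 2 := by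
    calc ENNReal.ofReal (wlo s b' * (1/262144)^2 * (c₀/(n:ℝ) * (2*c₀)))
        = (ENNReal.ofReal (wlo s b') * ENNReal.ofReal (1/262144) ^ 2) * volume T := by
          rw [hvol, ← ENNReal.ofReal_pow (by norm_num : (0:ℝ) ≤ 1/262144),
            ← ENNReal.ofReal_mul hw, ← ENNReal.ofReal_mul hcn,
            ← ENNReal.ofReal_mul hw2]
    _ = ∫⁻ p : ℝ × ℝ, T.indicator
          (fun _ => ENNReal.ofReal (wlo s b') * ENNReal.ofReal (1/262144) ^ 2) p := by
          rw [lintegral_indicator (measurableSet_Icc.prod measurableSet_Icc),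
            setLIntegral_const]
    _ ≤ _ := lintegral_mono key
  calc ENNReal.ofReal ((wlo s b' * (1/262144)^2 * (c₀/(n:ℝ) * (2*c₀))) ^ ((1:ℝ)/2))
      = (ENNReal.ofReal (wlo s b' * (1/262144)^2 * (c₀/(n:ℝ) * (2*c₀)))) ^ ((1:ℝ)/2) := by
        rw [ENNReal.ofReal_rpow_of_nonneg hw3 (by norm_num)]
  _ ≤ XpNorm s b' G := ENNReal.rpow_le_rpow hint (by norm_num)

noncomputable def Kb (b : ℝ) : ℝ := max ((Real.sqrt 2) ^ (2*b)) 1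

lemma Kb_pos (b : ℝ) : 0 < Kb b := lt_max_of_lt_right one_pos

lemma ite_ne_top' (P : Prop) [Decidable P] : (if P then (1:ℝ≥0∞) else 0) ≠ ⊤ := by
  split <;> simp

lemma lintegral_chi (a b : ℝ) :
    ∫⁻ y : ℝ, (if y ∈ Set.Icc a b then (1:ℝ≥0∞) else 0) = ENNReal.ofReal (b - a) := by
  have h : (fun y => if y ∈ Set.Icc a b then (1:ℝ≥0∞) else 0)
      = (Set.Icc a b).indicator (fun _ => (1:ℝ≥0∞)) := by
    funext y
    unfold Set.indicator
    split <;> rfl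
  rw [h, lintegral_indicator measurableSet_Icc, setLIntegral_const, one_mul, Real.volume_Icc]

lemma lintegral_D (c : ℝ≥0∞) (hc : c ≠ ⊤) (a b : ℝ) (q : ℝ → ℝ) (hq : Measurable q) :
    ∫⁻ p : ℝ × ℝ, c * ((if p.1 ∈ Set.Icc a b then (1:ℝ≥0∞) else 0) *
        (if p.2 - q p.1 ∈ Set.Icc (-1:ℝ) 1 then (1:ℝ≥0∞) else 0)) =
      c * (ENNReal.ofReal (b - a) * ENNReal.ofReal 2) := by
  have hmeas : Measurable fun p : ℝ × ℝ =>
      ((if p.1 ∈ Set.Icc a b then (1:ℝ≥0∞) else 0) *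
        (if p.2 - q p.1 ∈ Set.Icc (-1:ℝ) 1 then (1:ℝ≥0∞) else 0)) := by
    apply Measurable.mul
    · exact Measurable.ite (measurable_fst measurableSet_Icc) measurable_const measurable_const
    · exact Measurable.ite ((measurable_snd.sub (hq.comp measurable_fst))
        measurableSet_Icc) measurable_const measurable_const
  rw [lintegral_const_mul' _ _ hc]
  congr 1
  rw [Measure.volume_eq_prod]
  rw [lintegral_prod _ hmeas.aemeasurable]
  have inner : ∀ x : ℝ, (∫⁻ y : ℝ, (if x ∈ Set.Icc a b then (1:ℝ≥0∞) else 0) *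
      (if y - q x ∈ Set.Icc (-1:ℝ) 1 then (1:ℝ≥0∞) else 0))
      = (if x ∈ Set.Icc a b then (1:ℝ≥0∞) else 0) * ENNReal.ofReal 2 := by
    intro x
    rw [lintegral_const_mul' _ _ (ite_ne_top' _)]
    congr 1
    have h : ∀ y : ℝ, (if y - q x ∈ Set.Icc (-1:ℝ) 1 then (1:ℝ≥0∞) else 0)
        = (if y ∈ Set.Icc (q x - 1) (q x + 1) then (1:ℝ≥0∞) else 0) := by
      intro y
      have : (y - q x ∈ Set.Icc (-1:ℝ) 1) ↔ (y ∈ Set.Icc (q x - 1) (q x + 1)) := by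
        simp only [Set.mem_Icc]
        constructor <;> rintro ⟨u, v⟩ <;> exact ⟨by linarith, by linarith⟩
      rw [if_congr this rfl rfl]
    simp only [h]
    rw [lintegral_chi]
    congr 1
    ring
  simp only [inner]
  rw [lintegral_mul_const' _ _ ENNReal.ofReal_ne_top, lintegral_chi]

lemma Xp_ub (s b : ℝ) (hs : s ≤ 0) (n : ℕ) (hn : 1 ≤ n) :
    XpNorm s b (F12 n) ≤
      ENNReal.ofReal ((4 * Kb b * jb ((n:ℝ)-1) ^ (2*s)) ^ ((1:ℝ)/2)) := by
  have hn1 : (1:ℝ) ≤ (n:ℝ) := by exact_mod_cast hn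
  set whi : ℝ := jb ((n:ℝ)-1) ^ (2*s) * Kb b with hwhi
  have hwhi0 : 0 ≤ whi := mul_nonneg (Real.rpow_nonneg (jb_pos _).le _) (Kb_pos b).le
  have key : ∀ p : ℝ × ℝ,
      ENNReal.ofReal (jb p.1 ^ (2*s) * jb (p.2 + p.1^2) ^ (2*b)) * F12 n p ^ 2 ≤
      ENNReal.ofReal whi * ((if p.1 ∈ Set.Icc ((n:ℝ)-1) ((n:ℝ)+1) then (1:ℝ≥0∞) else 0) *
        (if p.2 - (-(p.1^2)) ∈ Set.Icc (-1:ℝ) 1 then (1:ℝ≥0∞) else 0)) := by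
    intro p
    by_cases hA : p.1 ∈ Set.Icc ((n:ℝ)-1) ((n:ℝ)+1)
    · by_cases hB : p.2 - (-(p.1^2)) ∈ Set.Icc (-1:ℝ) 1
      · rw [if_pos hA, if_pos hB]
        obtain ⟨hAa, hAb⟩ := hA
        obtain ⟨hBa, hBb⟩ := hB
        have hF : F12 n p ^ 2 ≤ 1 := by
          have : F12 n p ≤ 1 := by
            unfold F12
            calc ENNReal.ofReal (g₁₂ n p) ≤ ENNReal.ofReal 1 :=
              ENNReal.ofReal_le_ofReal (g12_le_one n p)
            _ = 1 := ENNReal.ofReal_one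
          exact pow_le_one' this 2
        have hjbs : jb p.1 ^ (2*s) ≤ jb ((n:ℝ)-1) ^ (2*s) := by
          apply Real.rpow_le_rpow_of_nonpos (jb_pos _)
          · exact jb_mono_sq (by nlinarith)
          · linarith
        have hjbb : jb (p.2 + p.1^2) ^ (2*b) ≤ Kb b := by
          unfold Kb
          rw [← jb_one]
          exact rpow_le_max (one_le_jb _) (jb_mono_sq (by nlinarith))
        have hwle : jb p.1 ^ (2*s) * jb (p.2 + p.1^2) ^ (2*b) ≤ whi := by
          rw [hwhi]
          exact mul_le_mul hjbs hjbb (Real.rpow_nonneg (jb_pos _).le _)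
            (Real.rpow_nonneg (jb_pos _).le _)
        calc ENNReal.ofReal (jb p.1 ^ (2*s) * jb (p.2 + p.1^2) ^ (2*b)) * F12 n p ^ 2
            ≤ ENNReal.ofReal whi * 1 :=
              mul_le_mul' (ENNReal.ofReal_le_ofReal hwle) hF
        _ = ENNReal.ofReal whi * (1 * 1) := by norm_num
      · have hB' : p.2 + p.1 ^ 2 ∉ Set.Icc (-1:ℝ) 1 := by
          intro hm
          obtain ⟨u, v⟩ := hm
          exact hB ⟨by linarith, by linarith⟩
        have hg : g₁₂ n p = 0 := by
          unfold g₁₂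
          rw [if_neg hB', mul_zero]
        rw [show F12 n p = 0 from by unfold F12; rw [hg]; simp]
        simp
    · have hA' : p.1 - (n:ℝ) ∉ Set.Icc (-1:ℝ) 1 := by
        intro hm
        obtain ⟨u, v⟩ := hm
        exact hA ⟨by linarith, by linarith⟩
      have hg : g₁₂ n p = 0 := by
        unfold g₁₂
        rw [if_neg hA', zero_mul]
      rw [show F12 n p = 0 from by unfold F12; rw [hg]; simp]
      simp
  have hint := lintegral_mono (μ := (volume : Measure (ℝ × ℝ))) key
  rw [lintegral_D (ENNReal.ofReal whi) ENNReal.ofReal_ne_top ((n:ℝ)-1) ((n:ℝ)+1)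
    (fun x => -(x^2)) (by fun_prop)] at hint
  have hq : ENNReal.ofReal whi * (ENNReal.ofReal ((n:ℝ)+1 - ((n:ℝ)-1)) * ENNReal.ofReal 2)
      = ENNReal.ofReal (4 * Kb b * jb ((n:ℝ)-1) ^ (2*s)) := by
    rw [show (n:ℝ)+1 - ((n:ℝ)-1) = 2 by ring, ← ENNReal.ofReal_mul (by norm_num),
      ← ENNReal.ofReal_mul hwhi0]
    rw [hwhi]
    norm_num
    ring_nf
  rw [hq] at hint
  unfold XpNorm
  calc (∫⁻ p : ℝ × ℝ,
      ENNReal.ofReal (jb p.1 ^ (2 * s) * jb (p.2 + p.1 ^ 2) ^ (2 * b)) * F12 n p ^ 2) ^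
      ((1:ℝ)/2) ≤ (ENNReal.ofReal (4 * Kb b * jb ((n:ℝ)-1) ^ (2*s))) ^ ((1:ℝ)/2) :=
        ENNReal.rpow_le_rpow hint (by norm_num)
  _ = ENNReal.ofReal ((4 * Kb b * jb ((n:ℝ)-1) ^ (2*s)) ^ ((1:ℝ)/2)) := by
    rw [ENNReal.ofReal_rpow_of_nonneg (mul_nonneg (mul_nonneg (by norm_num)
      (Kb_pos b).le) (Real.rpow_nonneg (jb_pos _).le _)) (by norm_num)]

lemma Xm_ub (s b : ℝ) (hs : s ≤ 0) (n : ℕ) (hn : 1 ≤ n) :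
    XmNorm s b (F34 n) ≤
      ENNReal.ofReal ((4 * Kb b * jb ((n:ℝ)-1) ^ (2*s)) ^ ((1:ℝ)/2)) := by
  have hn1 : (1:ℝ) ≤ (n:ℝ) := by exact_mod_cast hn
  set whi : ℝ := jb ((n:ℝ)-1) ^ (2*s) * Kb b with hwhi
  have hwhi0 : 0 ≤ whi := mul_nonneg (Real.rpow_nonneg (jb_pos _).le _) (Kb_pos b).le
  have key : ∀ p : ℝ × ℝ,
      ENNReal.ofReal (jb p.1 ^ (2*s) * jb (p.2 - p.1^2) ^ (2*b)) * F34 n p ^ 2 ≤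
      ENNReal.ofReal whi * ((if p.1 ∈ Set.Icc (-(n:ℝ)-1) (-(n:ℝ)+1) then (1:ℝ≥0∞) else 0) *
        (if p.2 - p.1^2 ∈ Set.Icc (-1:ℝ) 1 then (1:ℝ≥0∞) else 0)) := by
    intro p
    by_cases hA : p.1 ∈ Set.Icc (-(n:ℝ)-1) (-(n:ℝ)+1)
    · by_cases hB : p.2 - p.1^2 ∈ Set.Icc (-1:ℝ) 1
      · rw [if_pos hA, if_pos hB]
        obtain ⟨hAa, hAb⟩ := hA
        obtain ⟨hBa, hBb⟩ := hB
        have hF : F34 n p ^ 2 ≤ 1 := by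
          have : F34 n p ≤ 1 := by
            unfold F34
            calc ENNReal.ofReal (g₃₄ n p) ≤ ENNReal.ofReal 1 :=
              ENNReal.ofReal_le_ofReal (g34_le_one n p)
            _ = 1 := ENNReal.ofReal_one
          exact pow_le_one' this 2
        have hjbs : jb p.1 ^ (2*s) ≤ jb ((n:ℝ)-1) ^ (2*s) := by
          apply Real.rpow_le_rpow_of_nonpos (jb_pos _)
          · exact jb_mono_sq (by nlinarith)
          · linarith
        have hjbb : jb (p.2 - p.1^2) ^ (2*b) ≤ Kb b := by
          unfold Kb
          rw [← jb_one]
          exact rpow_le_max (one_le_jb _) (jb_mono_sq (by nlinarith))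
        have hwle : jb p.1 ^ (2*s) * jb (p.2 - p.1^2) ^ (2*b) ≤ whi := by
          rw [hwhi]
          exact mul_le_mul hjbs hjbb (Real.rpow_nonneg (jb_pos _).le _)
            (Real.rpow_nonneg (jb_pos _).le _)
        calc ENNReal.ofReal (jb p.1 ^ (2*s) * jb (p.2 - p.1^2) ^ (2*b)) * F34 n p ^ 2
            ≤ ENNReal.ofReal whi * 1 :=
              mul_le_mul' (ENNReal.ofReal_le_ofReal hwle) hF
        _ = ENNReal.ofReal whi * (1 * 1) := by norm_num
      · have hg : g₃₄ n p = 0 := by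
          unfold g₃₄
          rw [if_neg hB, mul_zero]
        rw [show F34 n p = 0 from by unfold F34; rw [hg]; simp]
        simp
    · have hA' : p.1 + (n:ℝ) ∉ Set.Icc (-1:ℝ) 1 := by
        intro hm
        obtain ⟨u, v⟩ := hm
        exact hA ⟨by linarith, by linarith⟩
      have hg : g₃₄ n p = 0 := by
        unfold g₃₄
        rw [if_neg hA', zero_mul]
      rw [show F34 n p = 0 from by unfold F34; rw [hg]; simp]
      simp
  have hint := lintegral_mono (μ := (volume : Measure (ℝ × ℝ))) key
  rw [lintegral_D (ENNReal.ofReal whi) ENNReal.ofReal_ne_top (-(n:ℝ)-1) (-(n:ℝ)+1)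
    (fun x => x^2) (by fun_prop)] at hint
  have hq : ENNReal.ofReal whi * (ENNReal.ofReal (-(n:ℝ)+1 - (-(n:ℝ)-1)) * ENNReal.ofReal 2)
      = ENNReal.ofReal (4 * Kb b * jb ((n:ℝ)-1) ^ (2*s)) := by
    rw [show -(n:ℝ)+1 - (-(n:ℝ)-1) = 2 by ring, ← ENNReal.ofReal_mul (by norm_num),
      ← ENNReal.ofReal_mul hwhi0]
    rw [hwhi]
    norm_num
    ring_nf
  rw [hq] at hint
  unfold XmNorm
  calc (∫⁻ p : ℝ × ℝ,
      ENNReal.ofReal (jb p.1 ^ (2 * s) * jb (p.2 - p.1 ^ 2) ^ (2 * b)) * F34 n p ^ 2) ^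
      ((1:ℝ)/2) ≤ (ENNReal.ofReal (4 * Kb b * jb ((n:ℝ)-1) ^ (2*s))) ^ ((1:ℝ)/2) :=
        ENNReal.rpow_le_rpow hint (by norm_num)
  _ = ENNReal.ofReal ((4 * Kb b * jb ((n:ℝ)-1) ^ (2*s)) ^ ((1:ℝ)/2)) := by
    rw [ENNReal.ofReal_rpow_of_nonneg (mul_nonneg (mul_nonneg (by norm_num)
      (Kb_pos b).le) (Real.rpow_nonneg (jb_pos _).le _)) (by norm_num)]

/-- The fourfold convolution of the counterexample bumps dominates
`c χ_{[-c,c]}(2nξ) χ_{[-c,c]}(τ)` for large `n`; consequently the estimate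
`‖u₁u₂ū₃ū₄‖_{X^+_{s,b'}} ≤ c ∏ ‖uᵢ‖_{X^+_{s,b}}` on `ℝ` fails for all `s < −1/8`
and all `b, b'`. -/
theorem quartic_failure_nonperiodic :
    (∃ c > (0 : ℝ), ∃ N : ℕ, ∀ n : ℕ, N ≤ n → ∀ p : ℝ × ℝ,
      c * ((if |2 * (n : ℝ) * p.1| ≤ c then 1 else 0) *
          (if |p.2| ≤ c then (1 : ℝ) else 0)) ≤
        conv4R (g₁₂ n) (g₁₂ n) (g₃₄ n) (g₃₄ n) p) ∧
    ∀ s : ℝ, s < -(1 / 8 : ℝ) → ∀ b b' : ℝ,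
      ¬ ∃ C : ℝ, 0 < C ∧ ∀ F₁ F₂ F₃ F₄ : ℝ × ℝ → ℝ≥0∞,
        Measurable F₁ → Measurable F₂ → Measurable F₃ → Measurable F₄ →
        XpNorm s b' (conv4E F₁ F₂ F₃ F₄) ≤
          ENNReal.ofReal C * XpNorm s b F₁ * XpNorm s b F₂ * XmNorm s b F₃ *
            XmNorm s b F₄ := by
  constructor
  · exact ⟨c₀, by norm_num [c₀], 1, fun n hn p => part1 n hn p⟩
  · intro s hs b b' hex
    obtain ⟨C, hC, hbound⟩ := hex
    have hs0 : s ≤ 0 := by linarith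
    -- the per-n inequality, in real form
    have main : ∀ n : ℕ, 1 ≤ n →
        (wlo s b' * (1/262144)^2 * (c₀/(n:ℝ) * (2*c₀))) ^ ((1:ℝ)/2) ≤
          C * ((4 * Kb b * jb ((n:ℝ)-1) ^ (2*s)) ^ ((1:ℝ)/2)) *
            ((4 * Kb b * jb ((n:ℝ)-1) ^ (2*s)) ^ ((1:ℝ)/2)) *
            ((4 * Kb b * jb ((n:ℝ)-1) ^ (2*s)) ^ ((1:ℝ)/2)) *
            ((4 * Kb b * jb ((n:ℝ)-1) ^ (2*s)) ^ ((1:ℝ)/2)) := by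
      intro n hn
      set u : ℝ := (4 * Kb b * jb ((n:ℝ)-1) ^ (2*s)) ^ ((1:ℝ)/2) with hu
      have hu0 : 0 ≤ u := Real.rpow_nonneg
        (mul_nonneg (mul_nonneg (by norm_num) (Kb_pos b).le)
          (Real.rpow_nonneg (jb_pos _).le _)) _
      have hmeas12 : Measurable (F12 n) := (meas_g12 n).ennreal_ofReal
      have hmeas34 : Measurable (F34 n) := (meas_g34 n).ennreal_ofReal
      have hb := hbound (F12 n) (F12 n) (F34 n) (F34 n) hmeas12 hmeas12 hmeas34 hmeas34
      have hlb := Xp_lb s b' (conv4E (F12 n) (F12 n) (F34 n) (F34 n)) n hn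
        (fun p hξ hτ => conv4E_lb n hn p.1 p.2 hξ hτ)
      have hub : ENNReal.ofReal C * XpNorm s b (F12 n) * XpNorm s b (F12 n) *
          XmNorm s b (F34 n) * XmNorm s b (F34 n) ≤
          ENNReal.ofReal C * ENNReal.ofReal u * ENNReal.ofReal u * ENNReal.ofReal u *
            ENNReal.ofReal u :=
        mul_le_mul' (mul_le_mul' (mul_le_mul' (mul_le_mul' le_rfl
          (Xp_ub s b hs0 n hn)) (Xp_ub s b hs0 n hn)) (Xm_ub s b hs0 n hn))
          (Xm_ub s b hs0 n hn)
      have hchain := le_trans (le_trans hlb hb) hub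
      have hcomb : ENNReal.ofReal C * ENNReal.ofReal u * ENNReal.ofReal u *
          ENNReal.ofReal u * ENNReal.ofReal u = ENNReal.ofReal (C*u*u*u*u) := by
        rw [← ENNReal.ofReal_mul hC.le, ← ENNReal.ofReal_mul (mul_nonneg hC.le hu0),
          ← ENNReal.ofReal_mul (mul_nonneg (mul_nonneg hC.le hu0) hu0),
          ← ENNReal.ofReal_mul (mul_nonneg (mul_nonneg (mul_nonneg hC.le hu0) hu0) hu0)]
      rw [hcomb] at hchain
      exact (ENNReal.ofReal_le_ofReal_iff
        (mul_nonneg (mul_nonneg (mul_nonneg (mul_nonneg hC.le hu0) hu0) hu0) hu0)).mp hchain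
    -- positivity bookkeeping
    have hWpos : 0 < wlo s b' := wlo_pos s b'
    have hc₀pos : (0:ℝ) < c₀ := by norm_num [c₀]
    set A : ℝ := wlo s b' * (1/262144)^2 * (2*c₀^2) with hA
    have hApos : 0 < A := by
      rw [hA]
      exact mul_pos (mul_pos hWpos (by norm_num)) (by nlinarith [hc₀pos])
    set K2 : ℝ := C * (16 * (Kb b)^2) with hK2
    have hK2pos : 0 < K2 := by
      rw [hK2]
      exact mul_pos hC (mul_pos (by norm_num) (pow_pos (Kb_pos b) 2))
    set K3 : ℝ := (A/2) ^ ((1:ℝ)/2) with hK3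
    have hK3pos : 0 < K3 := Real.rpow_pos_of_pos (by linarith) _
    set ε : ℝ := -(4*s) - 1/2 with hε
    have hεpos : 0 < ε := by rw [hε]; linarith
    set δ : ℝ := K3 / K2 with hδ
    have hδpos : 0 < δ := div_pos hK3pos hK2pos
    -- choose n
    obtain ⟨n, hnX⟩ := exists_nat_gt (max 1 ((δ⁻¹) ^ ((1:ℝ)/ε)) + 1)
    have hX1 : (1:ℝ) ≤ max 1 ((δ⁻¹) ^ ((1:ℝ)/ε)) := le_max_left _ _
    have hn2 : (2:ℝ) ≤ (n:ℝ) := by linarith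
    have hn1 : 1 ≤ n := by exact_mod_cast (by linarith : (1:ℝ) ≤ (n:ℝ))
    set x : ℝ := (n:ℝ) - 1 with hx
    have hx1 : 1 ≤ x := by rw [hx]; linarith
    have hxpos : 0 < x := by linarith
    have hxgt : (δ⁻¹) ^ ((1:ℝ)/ε) < x := by
      have := le_max_right 1 ((δ⁻¹) ^ ((1:ℝ)/ε))
      rw [hx]; linarith
    -- x^(-ε) < δ
    have hsmall : x ^ (-ε) < δ := by
      have h2 : δ⁻¹ < x ^ ε := by
        have hlt := Real.rpow_lt_rpow (Real.rpow_nonneg (inv_nonneg.2 hδpos.le) _)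
          hxgt hεpos
        rwa [← Real.rpow_mul (inv_nonneg.2 hδpos.le),
          show (1:ℝ)/ε * ε = 1 from by field_simp, Real.rpow_one] at hlt
      have h3 : (x ^ ε)⁻¹ < (δ⁻¹)⁻¹ := by
        exact inv_strictAnti₀ (inv_pos.2 hδpos) h2
      rw [inv_inv] at h3
      rwa [Real.rpow_neg hxpos.le]
    -- now derive the contradiction from `main n hn1`
    have hmain := main n hn1
    -- LHS rewrite : inner = A / n
    have hinner : wlo s b' * (1/262144)^2 * (c₀/(n:ℝ) * (2*c₀)) = A/(n:ℝ) := by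
      rw [hA]
      ring
    rw [hinner] at hmain
    -- RHS rewrite : C*u*u*u*u = K2 * (jb x ^ (4s))
    have hy : (0:ℝ) < 4 * Kb b * jb x ^ (2*s) := by
      have := Real.rpow_pos_of_pos (jb_pos x) (2*s)
      have := Kb_pos b
      positivity
    have huu : ((4 * Kb b * jb x ^ (2*s)) ^ ((1:ℝ)/2)) *
        ((4 * Kb b * jb x ^ (2*s)) ^ ((1:ℝ)/2)) = 4 * Kb b * jb x ^ (2*s) := by
      rw [← Real.rpow_add hy, show (1:ℝ)/2 + 1/2 = 1 by norm_num, Real.rpow_one]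
    have hjb4 : jb x ^ (2*s) * jb x ^ (2*s) = jb x ^ (4*s) := by
      rw [← Real.rpow_add (jb_pos x)]
      ring_nf
    have hRHS : C * ((4 * Kb b * jb x ^ (2*s)) ^ ((1:ℝ)/2)) *
        ((4 * Kb b * jb x ^ (2*s)) ^ ((1:ℝ)/2)) *
        ((4 * Kb b * jb x ^ (2*s)) ^ ((1:ℝ)/2)) *
        ((4 * Kb b * jb x ^ (2*s)) ^ ((1:ℝ)/2)) = K2 * jb x ^ (4*s) := by
      calc C * ((4 * Kb b * jb x ^ (2*s)) ^ ((1:ℝ)/2)) *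
          ((4 * Kb b * jb x ^ (2*s)) ^ ((1:ℝ)/2)) *
          ((4 * Kb b * jb x ^ (2*s)) ^ ((1:ℝ)/2)) *
          ((4 * Kb b * jb x ^ (2*s)) ^ ((1:ℝ)/2))
          = C * (((4 * Kb b * jb x ^ (2*s)) ^ ((1:ℝ)/2)) *
            ((4 * Kb b * jb x ^ (2*s)) ^ ((1:ℝ)/2))) *
            (((4 * Kb b * jb x ^ (2*s)) ^ ((1:ℝ)/2)) *
            ((4 * Kb b * jb x ^ (2*s)) ^ ((1:ℝ)/2))) := by ring
      _ = C * (4 * Kb b * jb x ^ (2*s)) * (4 * Kb b * jb x ^ (2*s)) := by rw [huu]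
      _ = K2 * (jb x ^ (2*s) * jb x ^ (2*s)) := by rw [hK2]; ring
      _ = K2 * jb x ^ (4*s) := by rw [hjb4]
    rw [hRHS] at hmain
    -- bound RHS above strictly
    have hjble : jb x ^ (4*s) ≤ x ^ (4*s) :=
      Real.rpow_le_rpow_of_nonpos hxpos (self_le_jb x) (by linarith)
    have hx4s : x ^ (4*s) = x ^ (-ε) * x ^ (-(1:ℝ)/2) := by
      rw [← Real.rpow_add hxpos]
      congr 1
      rw [hε]
      ring
    have hRHSlt : K2 * jb x ^ (4*s) < K3 * x ^ (-(1:ℝ)/2) := by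
      calc K2 * jb x ^ (4*s) ≤ K2 * x ^ (4*s) := by
            apply mul_le_mul_of_nonneg_left hjble hK2pos.le
      _ = (K2 * x ^ (-ε)) * x ^ (-(1:ℝ)/2) := by rw [hx4s]; ring
      _ < K3 * x ^ (-(1:ℝ)/2) := by
            apply mul_lt_mul_of_pos_right _ (Real.rpow_pos_of_pos hxpos _)
            calc K2 * x ^ (-ε) < K2 * δ := by
                  exact mul_lt_mul_of_pos_left hsmall hK2pos
            _ = K3 := by rw [hδ]; field_simp
    -- bound LHS below by K3 * x^(-1/2)
    have hLHS : K3 * x ^ (-(1:ℝ)/2) ≤ (A/(n:ℝ)) ^ ((1:ℝ)/2) := by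
      have hn2x : (n:ℝ) ≤ 2*x := by rw [hx]; linarith
      have hdiv : A/(2*x) ≤ A/(n:ℝ) := by
        apply div_le_div_of_nonneg_left hApos.le (by linarith) hn2x
      have h1 : (A/(2*x)) ^ ((1:ℝ)/2) ≤ (A/(n:ℝ)) ^ ((1:ℝ)/2) :=
        Real.rpow_le_rpow (by positivity) hdiv (by norm_num)
      have hx0 : x ≠ 0 := ne_of_gt hxpos
      have h2 : (A/(2*x)) ^ ((1:ℝ)/2) = K3 * x ^ (-(1:ℝ)/2) := by
        rw [show A/(2*x) = (A/2) * x⁻¹ from by field_simp,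
          Real.mul_rpow (by linarith : (0:ℝ) ≤ A/2) (inv_nonneg.2 hxpos.le),
          Real.inv_rpow hxpos.le, ← Real.rpow_neg hxpos.le, hK3]
        norm_num
      rw [← h2]
      exact h1
    have := lt_of_le_of_lt (le_trans hLHS hmain) hRHSlt
    exact absurd this (lt_irrefl _)
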